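/- For every pair (p₁, p₂) ∈ R², it is not the case that both the first and the second coordinate of ψ − A(p₁, p₂) lie in the image of the structure map ℂ → R (i.e. are constant multiples of 1). In other words, no cocycle cohomologous to ψ has its first two coordinates constant. -/

import Mathlib

open Polynomial

/-- The ring `R = ℂ[X]/(X³ - X²)`. -/
noncomputable abbrev R3 : Type :=
  Polynomial ℂ ⧸ Ideal.span {(X : Polynomial ℂ) ^ 3 - X ^ 2}

/-- The class `x` of `X` in `R = ℂ[X]/(X³ - X²)`. -/
noncomputable def xR : R3 :=
  Ideal.Quotient.mk (Ideal.span {(X : Polynomial ℂ) ^ 3 - X ^ 2}) X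

/-- The differential `∂⁻¹ : R² → R⁵`. -/
noncomputable def Amap (p : R3 × R3) : Fin 5 → R3 :=
  ![p.1,
    (3 * xR ^ 2 - 2 * xR) * p.1,
    (9 * xR - 1) * p.1 + (3 * xR ^ 2 - 2 * xR) * p.2,
    p.2,
    (3 * xR ^ 2 - 2 * xR) * p.2]

/-- The differential `∂⁰ : R⁵ → R²`. -/
noncomputable def Bmap (v : Fin 5 → R3) : R3 × R3 :=
  ((9 * xR - 1) * v 0 - v 2 + (3 * xR ^ 2 - 2 * xR) * v 3,
   (9 * xR - 1) * v 1 - (3 * xR ^ 2 - 2 * xR) * v 2 + (3 * xR ^ 2 - 2 * xR) * v 4)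

/-- The Gornik cocycle `ψ = (x², 0, 0, -8x², 0) ∈ R⁵`. -/
noncomputable def psi : Fin 5 → R3 :=
  ![xR ^ 2, 0, 0, -8 * xR ^ 2, 0]

noncomputable def ev1 : R3 →ₐ[ℂ] ℂ :=
  Ideal.Quotient.liftₐ _ (aeval (1:ℂ)) (by
    intro a ha
    rw [Ideal.mem_span_singleton] at ha
    obtain ⟨q, rfl⟩ := ha
    simp)

noncomputable def evD : R3 →ₐ[ℂ] DualNumber ℂ :=
  Ideal.Quotient.liftₐ _ (aeval (DualNumber.eps : DualNumber ℂ)) (by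
    intro a ha
    rw [Ideal.mem_span_singleton] at ha
    obtain ⟨q, rfl⟩ := ha
    simp [pow_succ, DualNumber.eps_mul_eps])

/-- No cocycle cohomologous to `ψ` has both of its first two coordinates constant,
i.e. in the image of the structure map `ℂ → R`. -/
theorem no_constant_representative :
    ∀ p : R3 × R3,
      ¬ ((psi - Amap p) 0 ∈ Set.range (algebraMap ℂ R3) ∧
         (psi - Amap p) 1 ∈ Set.range (algebraMap ℂ R3)) := by
  rintro p ⟨⟨c, hc⟩, ⟨d, hd⟩⟩
  simp only [Pi.sub_apply, psi, Amap, Matrix.cons_val_zero, Matrix.cons_val_one,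
    Matrix.head_cons] at hc hd
  -- hc : algebraMap ℂ R3 c = xR^2 - p.1, hd : algebraMap d = 0 - (3xR²-2xR)*p.1
  have hx3 : xR ^ 3 = xR ^ 2 := by
    rw [xR, ← map_pow, ← map_pow, Ideal.Quotient.eq, Ideal.mem_span_singleton]
  have hevx : evD xR = DualNumber.eps := by
    simp [evD, xR, Ideal.Quotient.liftₐ_apply]
    erw [Ideal.Quotient.lift_mk]
    simp
  have hp1 : evD p.1 = - TrivSqZeroExt.inl c := by
    have h1 := congrArg evD hc
    have h2 : (DualNumber.eps : DualNumber ℂ)^2 = 0 := by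
      rw [sq, DualNumber.eps_mul_eps]
    rw [map_sub, map_pow, hevx, AlgHom.commutes, h2, zero_sub,
      eq_comm, neg_eq_iff_eq_neg, eq_comm] at h1
    rw [← h1, TrivSqZeroExt.algebraMap_eq_inl']
    simp
  have hD := congrArg evD hd
  rw [map_sub, map_zero, map_mul, map_sub, map_mul, map_mul, map_pow, hevx,
    AlgHom.commutes, hp1] at hD
  have h2 : (DualNumber.eps : DualNumber ℂ)^2 = 0 := by
    rw [sq, DualNumber.eps_mul_eps]
  rw [h2] at hD
  have hc0 : c = 0 := by
    have h := congrArg TrivSqZeroExt.snd hD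
    simp [TrivSqZeroExt.snd_mul, TrivSqZeroExt.algebraMap_eq_inl', map_ofNat] at h
    rcases h with h | h
    · have h2' : TrivSqZeroExt.fst (2 : DualNumber ℂ) = (2 : ℂ) :=
        map_ofNat (TrivSqZeroExt.fstHom ℂ ℂ ℂ) 2
      rw [h2'] at h
      exact absurd h two_ne_zero
    · exact h
  have hd0 : d = 0 := by
    have h := congrArg TrivSqZeroExt.fst hD
    simpa [TrivSqZeroExt.fst_mul, TrivSqZeroExt.algebraMap_eq_inl', map_ofNat] using h
  rw [hc0, map_zero, eq_comm, sub_eq_zero] at hc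
  rw [hd0, map_zero, ← hc, eq_comm, zero_sub, neg_eq_zero] at hd
  -- hd : (3*xR^2 - 2*xR) * xR^2 = 0
  have hx2 : xR ^ 2 = 0 := by
    have h4 : xR ^ 4 = xR ^ 2 := by
      calc xR ^ 4 = xR ^ 3 * xR := by ring
      _ = xR ^ 2 * xR := by rw [hx3]
      _ = xR ^ 3 := by ring
      _ = xR ^ 2 := hx3
    calc xR ^ 2 = 3 * xR ^ 4 - 2 * xR ^ 3 := by rw [h4, hx3]; ring
    _ = (3 * xR ^ 2 - 2 * xR) * xR ^ 2 := by ring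
    _ = 0 := hd
  have := congrArg ev1 hx2
  rw [map_pow, map_zero] at this
  have hev1 : ev1 xR = 1 := by
    simp [ev1, xR, Ideal.Quotient.liftₐ_apply, Ideal.Quotient.lift_mk]
  rw [hev1, one_pow] at this
  exact one_ne_zero this
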